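/- Let C and D be coalgebras over a field k. Suppose assignments F and G are given, where F assigns to every finite-dimensional right C-comodule (M, ρ_M) a right D-coaction ρ^F_M on M such that every C-comodule map between finite-dimensional C-comodules is a D-comodule map for the assigned coactions, and G assigns to every finite-dimensional right D-comodule (N, σ_N) a right C-coaction σ^G_N on N such that every D-comodule map between finite-dimensional D-comodules is a C-comodule map for the assigned coactions; assume moreover that G and F are mutually inverse, i.e. σ^G applied to (M, ρ^F_M) returns ρ_M for every finite-dimensional C-comodule (M, ρ_M), and ρ^F applied to (N, σ^G_N) returns σ_N for every finite-dimensional D-comodule (N, σ_N). Then the unique coalgebra map φ : C → D with ρ^F_M = (id ⊗ φ) ∘ ρ_M for all finite-dimensional C-comodules is bijective, i.e. an isomorphism of coalgebras. -/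

import Mathlib

open TensorProduct

noncomputable section

/-- `ρ : M →ₗ M ⊗ C` is a (coassociative, counital) right coaction of the coalgebra `C`. -/
def IsCoaction (k : Type) [Field k] (C : Type) [AddCommGroup C] [Module k C] [Coalgebra k C]
    (M : Type) [AddCommGroup M] [Module k M] (ρ : M →ₗ[k] M ⊗[k] C) : Prop :=
  LinearMap.rTensor C ρ ∘ₗ ρ =
    (TensorProduct.assoc k M C C).symm.toLinearMap ∘ₗ
      LinearMap.lTensor M (Coalgebra.comul (R := k)) ∘ₗ ρ ∧
  (TensorProduct.rid k M).toLinearMap ∘ₗ LinearMap.lTensor M (Coalgebra.counit (R := k)) ∘ₗ ρ =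
    LinearMap.id

/-- `φ : C →ₗ D` is a map of coalgebras. -/
def IsCoalgebraMap (k : Type) [Field k]
    (C : Type) [AddCommGroup C] [Module k C] [Coalgebra k C]
    (D : Type) [AddCommGroup D] [Module k D] [Coalgebra k D] (φ : C →ₗ[k] D) : Prop :=
  Coalgebra.comul (R := k) (A := D) ∘ₗ φ =
    TensorProduct.map φ φ ∘ₗ Coalgebra.comul (R := k) (A := C) ∧
  Coalgebra.counit (R := k) (A := D) ∘ₗ φ = Coalgebra.counit (R := k) (A := C)


section AuxHelpers

open LinearMap Coalgebra


open LinearMap Coalgebra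

variable {k : Type} [Field k]

/-- Contraction of the left factor with a functional. -/
def Lc {M : Type} [AddCommGroup M] [Module k M] (ξ : M →ₗ[k] k) (X : Type) [AddCommGroup X]
    [Module k X] : M ⊗[k] X →ₗ[k] X :=
  (TensorProduct.lid k X).toLinearMap ∘ₗ rTensor X ξ

@[simp] lemma Lc_tmul {M : Type} [AddCommGroup M] [Module k M] (ξ : M →ₗ[k] k) {X : Type}
    [AddCommGroup X] [Module k X] (m : M) (x : X) : Lc ξ X (m ⊗ₜ[k] x) = ξ m • x := by
  simp [Lc]

lemma Lc_lTensor {M X Y : Type} [AddCommGroup M] [Module k M] [AddCommGroup X] [Module k X]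
    [AddCommGroup Y] [Module k Y] (ξ : M →ₗ[k] k) (g : X →ₗ[k] Y) (u : M ⊗[k] X) :
    Lc ξ Y (lTensor M g u) = g (Lc ξ X u) := by
  induction u using TensorProduct.induction_on with
  | zero => simp
  | tmul m x => simp
  | add u v hu hv => simp [map_add, hu, hv]

lemma Lc_rTensor {M M' X : Type} [AddCommGroup M] [Module k M] [AddCommGroup M'] [Module k M']
    [AddCommGroup X] [Module k X] (ξ : M →ₗ[k] k) (g : M' →ₗ[k] M) (u : M' ⊗[k] X) :
    Lc ξ X (rTensor X g u) = Lc (ξ ∘ₗ g) X u := by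
  induction u using TensorProduct.induction_on with
  | zero => simp
  | tmul m x => simp
  | add u v hu hv => simp [map_add, hu, hv]

lemma Lc_assoc {M X : Type} [AddCommGroup M] [Module k M] [AddCommGroup X] [Module k X]
    (ξ : M →ₗ[k] k) (w : (M ⊗[k] X) ⊗[k] X) :
    Lc ξ (X ⊗[k] X) (TensorProduct.assoc k M X X w) = rTensor X (Lc ξ X) w := by
  induction w using TensorProduct.induction_on with
  | zero => simp
  | tmul u x =>
      induction u using TensorProduct.induction_on with
      | zero => simp
      | tmul m y => simp only [assoc_tmul, Lc_tmul, rTensor_tmul, smul_tmul']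
      | add u v hu hv =>
          simp only [add_tmul, map_add, hu, hv]
  | add u v hu hv => simp [map_add, hu, hv]

lemma assoc_symm_rTensor {X Y A : Type} [AddCommGroup X] [Module k X] [AddCommGroup Y] [Module k Y]
    [AddCommGroup A] [Module k A] (f : X →ₗ[k] Y) (u : X ⊗[k] (A ⊗[k] A)) :
    (TensorProduct.assoc k Y A A).symm (rTensor (A ⊗[k] A) f u) =
      rTensor A (rTensor A f) ((TensorProduct.assoc k X A A).symm u) := by
  induction u using TensorProduct.induction_on with
  | zero => simp
  | tmul x t =>
      induction t using TensorProduct.induction_on with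
      | zero => simp
      | tmul y z => simp
      | add t s ht hs => simp only [tmul_add, map_add, ht, hs]
  | add u v hu hv => simp [map_add, hu, hv]

variable {A : Type} [AddCommGroup A] [Module k A] [Coalgebra k A]

lemma counit_Lc {M : Type} [AddCommGroup M] [Module k M] (ξ : M →ₗ[k] k) (u : M ⊗[k] A) :
    counit (R := k) (Lc ξ A u) = ξ ((TensorProduct.rid k M) (lTensor M (counit (R := k)) u)) := by
  induction u using TensorProduct.induction_on with
  | zero => simp
  | tmul m a => simp [mul_comm]
  | add u v hu hv => simp [map_add, hu, hv]

lemma subtype_rid_lTensor_counit (V : Submodule k A) (u : (↥V) ⊗[k] A) :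
    (((TensorProduct.rid k ↥V) (lTensor (↥V) (counit (R := k)) u) : ↥V) : A) =
      (TensorProduct.rid k A) (lTensor A (counit (R := k)) (rTensor A V.subtype u)) := by
  induction u using TensorProduct.induction_on with
  | zero => simp
  | tmul m a => simp
  | add u v hu hv => simp [map_add, hu, hv]

/-- Contracting a restricted coaction with the counit recovers the element. -/
lemma Lc_counit_of_restrict {V : Submodule k A} {ρ : ↥V →ₗ[k] (↥V) ⊗[k] A}
    (hres : rTensor A V.subtype ∘ₗ ρ = comul (R := k) ∘ₗ V.subtype) (v : V) :
    Lc ((counit (R := k)) ∘ₗ V.subtype) A (ρ v) = (v : A) := by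
  have h1 : rTensor A V.subtype (ρ v) = comul (R := k) ((v : A)) := by
    have := LinearMap.congr_fun hres v
    simpa using this
  have := Lc_rTensor (X := A) (counit (R := k)) V.subtype (ρ v)
  rw [← this, h1]
  simp [Lc]

/-- Restriction of the comultiplication to a subcomodule. -/
lemma exists_restrict_coaction (V : Submodule k A)
    (hV : ∀ v : V, comul (R := k) ((v : A)) ∈ LinearMap.range (rTensor A V.subtype)) :
    ∃ ρ : ↥V →ₗ[k] (↥V) ⊗[k] A,
      rTensor A V.subtype ∘ₗ ρ = comul (R := k) ∘ₗ V.subtype ∧ IsCoaction k A (↥V) ρ := by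
  have hinj : Function.Injective (rTensor A V.subtype) :=
    Module.Flat.rTensor_preserves_injective_linearMap _ V.injective_subtype
  obtain ⟨π, hπ⟩ := V.subtype.exists_leftInverse_of_injective (by simp [Submodule.ker_subtype])
  set ρ : ↥V →ₗ[k] (↥V) ⊗[k] A := rTensor A π ∘ₗ comul (R := k) ∘ₗ V.subtype with hρdef
  have hres : rTensor A V.subtype ∘ₗ ρ = comul (R := k) ∘ₗ V.subtype := by
    ext v
    obtain ⟨w, hw⟩ := hV v
    simp only [hρdef, LinearMap.comp_apply, Submodule.subtype_apply]
    rw [← hw, ← rTensor_comp_apply, ← rTensor_comp_apply, LinearMap.comp_assoc, hπ,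
      LinearMap.comp_id]
  have hresap : ∀ v : V, rTensor A V.subtype (ρ v) = comul (R := k) ((v : A)) := by
    intro v
    have := LinearMap.congr_fun hres v
    simpa using this
  have hJ : Function.Injective (rTensor A (rTensor A V.subtype)) :=
    Module.Flat.rTensor_preserves_injective_linearMap _ hinj
  have comm : ∀ u : (↥V) ⊗[k] A, rTensor (A ⊗[k] A) V.subtype (lTensor (↥V) (comul (R := k)) u)
      = lTensor A (comul (R := k)) (rTensor A V.subtype u) := by
    intro u
    rw [← LinearMap.comp_apply, LinearMap.rTensor_comp_lTensor, ← LinearMap.lTensor_comp_rTensor,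
      LinearMap.comp_apply]
  refine ⟨ρ, hres, ?_, ?_⟩
  · ext v
    apply hJ
    simp only [LinearMap.comp_apply, LinearEquiv.coe_coe]
    rw [← rTensor_comp_apply, hres, rTensor_comp, LinearMap.comp_apply, hresap,
      ← assoc_symm_rTensor, comm, hresap]
    exact (Coalgebra.coassoc_symm_apply ((v : A))).symm
  · ext v
    simp only [LinearMap.comp_apply, LinearEquiv.coe_coe, LinearMap.id_apply]
    rw [subtype_rid_lTensor_counit, hresap]
    simp


end AuxHelpers

section FundHelpers

open LinearMap Coalgebra

open LinearMap Coalgebra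

variable {k : Type} [Field k] {A : Type} [AddCommGroup A] [Module k A]

/-- Coordinates of an element of `X ⊗ A` with respect to a basis of `A`. -/
def EE {ι : Type} [DecidableEq ι] (b : Module.Basis ι k A) (X : Type) [AddCommGroup X] [Module k X] :
    X ⊗[k] A ≃ₗ[k] (ι →₀ X) :=
  (LinearEquiv.lTensor X b.repr).trans (finsuppScalarRight k k X ι)

@[simp] lemma EE_tmul {ι : Type} [DecidableEq ι] (b : Module.Basis ι k A) {X : Type} [AddCommGroup X]
    [Module k X] (x : X) (a : A) (i : ι) : EE b X (x ⊗ₜ[k] a) i = b.repr a i • x := by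
  simp [EE, finsuppScalarRight_apply_tmul_apply]

lemma EE_symm_apply {ι : Type} [DecidableEq ι] (b : Module.Basis ι k A) {X : Type} [AddCommGroup X]
    [Module k X] (f : ι →₀ X) : (EE b X).symm f = f.sum fun j x => x ⊗ₜ[k] b j := by
  induction f using Finsupp.induction_linear with
  | zero => simp
  | add f g hf hg =>
      rw [map_add, hf, hg, Finsupp.sum_add_index] <;> simp [add_tmul]
  | single j x =>
      rw [Finsupp.sum_single_index (by simp)]
      simp only [EE, LinearEquiv.trans_symm, LinearEquiv.trans_apply]
      rw [finsuppScalarRight_symm_apply_single]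
      simp [LinearEquiv.lTensor]

lemma EE_reconstruct {ι : Type} [DecidableEq ι] (b : Module.Basis ι k A) {X : Type} [AddCommGroup X]
    [Module k X] (t : X ⊗[k] A) : (EE b X t).sum (fun j x => x ⊗ₜ[k] b j) = t := by
  rw [← EE_symm_apply]
  exact (EE b X).symm_apply_apply t

lemma EE_rTensor {ι : Type} [DecidableEq ι] (b : Module.Basis ι k A) {X Y : Type} [AddCommGroup X]
    [Module k X] [AddCommGroup Y] [Module k Y] (g : X →ₗ[k] Y) (t : X ⊗[k] A) (i : ι) :
    EE b Y (rTensor A g t) i = g (EE b X t i) := by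
  induction t using TensorProduct.induction_on with
  | zero => simp
  | tmul x a => simp
  | add u v hu hv => simp [map_add, hu, hv]

lemma EE_assoc_symm {ι : Type} [DecidableEq ι] (b : Module.Basis ι k A) (x : A) (u : A ⊗[k] A) (i : ι) :
    EE b (A ⊗[k] A) ((TensorProduct.assoc k A A A).symm (x ⊗ₜ[k] u)) i = x ⊗ₜ[k] (EE b A u i) := by
  induction u using TensorProduct.induction_on with
  | zero => simp
  | tmul y z => simp [assoc_symm_tmul, tmul_smul]
  | add u v hu hv => simp only [tmul_add, map_add, hu, hv, Finsupp.add_apply]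

variable [Coalgebra k A]

lemma exists_fd_subcomodule (a : A) :
    ∃ V : Submodule k A, a ∈ V ∧ FiniteDimensional k ↥V ∧
      ∀ v : ↥V, comul (R := k) ((v : A)) ∈ LinearMap.range (rTensor A V.subtype) := by
  classical
  set b := Module.Basis.ofVectorSpace k A with hb
  set f := EE b A (comul (R := k) a) with hf
  set S : Set A := insert a ((f.support.image f : Finset A) : Set A) with hS
  set V : Submodule k A := Submodule.span k S with hV
  have hSfin : S.Finite := (Finset.finite_toSet _).insert a
  have haS : a ∈ S := Set.mem_insert _ _
  have hfS : ∀ j ∈ f.support, f j ∈ S := fun j hj =>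
    Set.mem_insert_of_mem _ (Finset.mem_coe.2 (Finset.mem_image_of_mem f hj))
  have hmem : ∀ x : A, x ∈ V → ∀ y : A, x ⊗ₜ[k] y ∈ LinearMap.range (rTensor A V.subtype) :=
    fun x hx y => ⟨(⟨x, hx⟩ : ↥V) ⊗ₜ[k] y, by simp⟩
  refine ⟨V, Submodule.subset_span haS, FiniteDimensional.span_of_finite k hSfin, ?_⟩
  have key : V ≤ (LinearMap.range (rTensor A V.subtype)).comap (comul (R := k) (A := A)) := by
    rw [Submodule.span_le]
    intro s hs
    rw [SetLike.mem_coe, Submodule.mem_comap]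
    have hgen : s = a ∨ ∃ i ∈ f.support, s = f i := by
      rcases hs with h | h
      · exact Or.inl h
      · obtain ⟨i, hi, hfi⟩ := Finset.mem_image.1 (Finset.mem_coe.1 h)
        exact Or.inr ⟨i, hi, hfi.symm⟩
    have hΔa : comul (R := k) a = f.sum fun j x => x ⊗ₜ[k] b j := (EE_reconstruct b _).symm
    rcases hgen with rfl | ⟨i, hi, rfl⟩
    · rw [hΔa]
      exact Submodule.sum_mem _ fun j hj => hmem _ (Submodule.subset_span (hfS j hj)) _
    · have h1 : comul (R := k) (f i) = EE b (A ⊗[k] A) (rTensor A (comul (R := k)) (comul a)) i :=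
        (EE_rTensor b _ _ i).symm
      have h2 : rTensor A (comul (R := k)) (comul (R := k) a) =
          (TensorProduct.assoc k A A A).symm (lTensor A (comul (R := k)) (comul (R := k) a)) :=
        (Coalgebra.coassoc_symm_apply a).symm
      have h3 : lTensor A (comul (R := k)) (comul (R := k) a) =
          f.sum fun j x => x ⊗ₜ[k] (comul (R := k) (b j)) := by
        rw [hΔa, map_finsuppSum]
        simp [Finsupp.sum]
      rw [h1, h2, h3, Finsupp.sum, map_sum, map_sum]
      rw [Finsupp.finset_sum_apply]
      refine Submodule.sum_mem _ fun j hj => ?_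
      rw [EE_assoc_symm]
      exact hmem _ (Submodule.subset_span (hfS j hj)) _
  exact fun v => key v.2


end FundHelpers

variable (k : Type) [Field k]
variable (C : Type) [AddCommGroup C] [Module k C] [Coalgebra k C]
variable (D : Type) [AddCommGroup D] [Module k D] [Coalgebra k D]

/-- If the assignments `F` (from `C`-comodules to `D`-comodules) and `G` (from
`D`-comodules to `C`-comodules) are mutually inverse, then the unique coalgebra map
`φ : C → D` with `ρ^F_M = (id ⊗ φ) ∘ ρ_M` is bijective, i.e. an isomorphism of
coalgebras. -/
theorem reconstruction_equivalence_isomorphism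
    (F : ∀ (M : Type) [AddCommGroup M] [Module k M] [FiniteDimensional k M]
      (ρ : M →ₗ[k] M ⊗[k] C), IsCoaction k C M ρ → (M →ₗ[k] M ⊗[k] D))
    (hF : ∀ (M : Type) [AddCommGroup M] [Module k M] [FiniteDimensional k M]
      (ρ : M →ₗ[k] M ⊗[k] C) (h : IsCoaction k C M ρ), IsCoaction k D M (F M ρ h))
    (hFmap : ∀ (M : Type) [AddCommGroup M] [Module k M] [FiniteDimensional k M]
      (N : Type) [AddCommGroup N] [Module k N] [FiniteDimensional k N]
      (ρM : M →ₗ[k] M ⊗[k] C) (hM : IsCoaction k C M ρM)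
      (ρN : N →ₗ[k] N ⊗[k] C) (hN : IsCoaction k C N ρN)
      (f : M →ₗ[k] N), ρN ∘ₗ f = LinearMap.rTensor C f ∘ₗ ρM →
        F N ρN hN ∘ₗ f = LinearMap.rTensor D f ∘ₗ F M ρM hM)
    (G : ∀ (N : Type) [AddCommGroup N] [Module k N] [FiniteDimensional k N]
      (σ : N →ₗ[k] N ⊗[k] D), IsCoaction k D N σ → (N →ₗ[k] N ⊗[k] C))
    (hG : ∀ (N : Type) [AddCommGroup N] [Module k N] [FiniteDimensional k N]
      (σ : N →ₗ[k] N ⊗[k] D) (h : IsCoaction k D N σ), IsCoaction k C N (G N σ h))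
    (hGmap : ∀ (M : Type) [AddCommGroup M] [Module k M] [FiniteDimensional k M]
      (N : Type) [AddCommGroup N] [Module k N] [FiniteDimensional k N]
      (σM : M →ₗ[k] M ⊗[k] D) (hM : IsCoaction k D M σM)
      (σN : N →ₗ[k] N ⊗[k] D) (hN : IsCoaction k D N σN)
      (f : M →ₗ[k] N), σN ∘ₗ f = LinearMap.rTensor D f ∘ₗ σM →
        G N σN hN ∘ₗ f = LinearMap.rTensor C f ∘ₗ G M σM hM)
    (hGF : ∀ (M : Type) [AddCommGroup M] [Module k M] [FiniteDimensional k M]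
      (ρ : M →ₗ[k] M ⊗[k] C) (h : IsCoaction k C M ρ), G M (F M ρ h) (hF M ρ h) = ρ)
    (hFG : ∀ (N : Type) [AddCommGroup N] [Module k N] [FiniteDimensional k N]
      (σ : N →ₗ[k] N ⊗[k] D) (h : IsCoaction k D N σ), F N (G N σ h) (hG N σ h) = σ) :
    ∀ φ : C →ₗ[k] D, IsCoalgebraMap k C D φ →
      (∀ (M : Type) [AddCommGroup M] [Module k M] [FiniteDimensional k M]
        (ρ : M →ₗ[k] M ⊗[k] C) (h : IsCoaction k C M ρ),
          F M ρ h = LinearMap.lTensor M φ ∘ₗ ρ) →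
      Function.Bijective φ := by
  intro φ hφ hφF
  clear hφ
  constructor
  · -- injectivity
    refine (injective_iff_map_eq_zero φ).2 fun c hc => ?_
    obtain ⟨Ms, hcM, hfdM, hsubM⟩ := exists_fd_subcomodule (k := k) (A := C) c
    haveI := hfdM
    obtain ⟨ρ, hres, hρ⟩ := exists_restrict_coaction Ms hsubM
    have hσ : IsCoaction k D ↥Ms (F ↥Ms ρ hρ) := hF ↥Ms ρ hρ
    have hσeq : F ↥Ms ρ hρ = LinearMap.lTensor ↥Ms φ ∘ₗ ρ := hφF ↥Ms ρ hρ
    set ξ : ↥Ms →ₗ[k] k := Coalgebra.counit (R := k) ∘ₗ Ms.subtype with hξdef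
    set f : ↥Ms →ₗ[k] D := Lc ξ D ∘ₗ F ↥Ms ρ hρ with hfdef
    have hfap : ∀ m : ↥Ms, f m = Lc ξ D (F ↥Ms ρ hρ m) := fun m => rfl
    have hfcom : Coalgebra.comul (R := k) ∘ₗ f = LinearMap.rTensor D f ∘ₗ F ↥Ms ρ hρ := by
      ext m
      have hco := LinearMap.congr_fun hσ.1 m
      simp only [LinearMap.comp_apply, LinearEquiv.coe_coe] at hco
      have h2 : LinearMap.lTensor ↥Ms (Coalgebra.comul (R := k)) (F ↥Ms ρ hρ m) =
          TensorProduct.assoc k (↥Ms) D D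
            (LinearMap.rTensor D (F ↥Ms ρ hρ) (F ↥Ms ρ hρ m)) := by
        rw [hco]; simp
      simp only [LinearMap.comp_apply, hfap]
      rw [← Lc_lTensor ξ (Coalgebra.comul (R := k)) (F ↥Ms ρ hρ m), h2, Lc_assoc,
        ← LinearMap.rTensor_comp_apply]
    have hNsub : ∀ n : ↥(LinearMap.range f),
        Coalgebra.comul (R := k) ((n : D)) ∈
          LinearMap.range (LinearMap.rTensor D (LinearMap.range f).subtype) := by
      rintro ⟨n, m, rfl⟩
      have h1 := LinearMap.congr_fun hfcom m
      simp only [LinearMap.comp_apply] at h1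
      have h2 : LinearMap.rTensor D f (F ↥Ms ρ hρ m) =
          LinearMap.rTensor D (LinearMap.range f).subtype
            (LinearMap.rTensor D f.rangeRestrict (F ↥Ms ρ hρ m)) := by
        rw [← LinearMap.rTensor_comp_apply]
        congr 1
      exact ⟨_, by rw [h1, h2]⟩
    obtain ⟨σN, hNres, hσN⟩ := exists_restrict_coaction (LinearMap.range f) hNsub
    have hinjN : Function.Injective (LinearMap.rTensor D (LinearMap.range f).subtype) :=
      Module.Flat.rTensor_preserves_injective_linearMap _
        (LinearMap.range f).injective_subtype
    have hf'com : σN ∘ₗ f.rangeRestrict = LinearMap.rTensor D f.rangeRestrict ∘ₗ F ↥Ms ρ hρ := by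
      apply LinearMap.ext; intro m
      apply hinjN
      have hres1 := LinearMap.congr_fun hNres (f.rangeRestrict m)
      simp only [LinearMap.comp_apply, Submodule.subtype_apply] at hres1 ⊢
      rw [hres1, ← LinearMap.rTensor_comp_apply]
      have hcoe : ((f.rangeRestrict m : ↥(LinearMap.range f)) : D) = f m := rfl
      have h1 := LinearMap.congr_fun hfcom m
      simp only [LinearMap.comp_apply] at h1
      rw [hcoe, h1]
      congr 1
    have hGnat := hGmap (↥Ms) (↥(LinearMap.range f)) (F ↥Ms ρ hρ) hσ σN hσN
      f.rangeRestrict hf'com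
    rw [hGF ↥Ms ρ hρ] at hGnat
    set cM : ↥Ms := ⟨c, hcM⟩ with hcMdef
    have hfc : f cM = 0 := by
      have h1 : F ↥Ms ρ hρ cM = LinearMap.lTensor ↥Ms φ (ρ cM) := by
        rw [hσeq]; rfl
      rw [hfap, h1, Lc_lTensor, Lc_counit_of_restrict hres cM]
      exact hc
    have hf'c : f.rangeRestrict cM = 0 := by
      apply Subtype.ext
      simpa using hfc
    have hev := LinearMap.congr_fun hGnat cM
    simp only [LinearMap.comp_apply] at hev
    rw [hf'c, map_zero] at hev
    have hev2 := congrArg (Lc (Coalgebra.counit (R := k) ∘ₗ (LinearMap.range f).subtype) C) hev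
    rw [map_zero, Lc_rTensor] at hev2
    have hcf : (Coalgebra.counit (R := k) ∘ₗ (LinearMap.range f).subtype) ∘ₗ f.rangeRestrict
        = ξ := by
      ext m
      simp only [LinearMap.comp_apply, Submodule.subtype_apply]
      have hcoe : ((f.rangeRestrict m : ↥(LinearMap.range f)) : D) = f m := rfl
      rw [hcoe, hfap, counit_Lc]
      have h2 := LinearMap.congr_fun hσ.2 m
      simp only [LinearMap.comp_apply, LinearEquiv.coe_coe, LinearMap.id_apply] at h2
      rw [h2]
    rw [hcf, Lc_counit_of_restrict hres cM] at hev2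
    exact hev2.symm
  · -- surjectivity
    intro d
    obtain ⟨Ns, hdN, hfdN, hsubN⟩ := exists_fd_subcomodule (k := k) (A := D) d
    haveI := hfdN
    obtain ⟨σ, hres, hσ⟩ := exists_restrict_coaction Ns hsubN
    have h1 : F ↥Ns (G ↥Ns σ hσ) (hG ↥Ns σ hσ) = σ := hFG ↥Ns σ hσ
    have h2 : F ↥Ns (G ↥Ns σ hσ) (hG ↥Ns σ hσ) = LinearMap.lTensor ↥Ns φ ∘ₗ G ↥Ns σ hσ :=
      hφF ↥Ns (G ↥Ns σ hσ) (hG ↥Ns σ hσ)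
    set dN : ↥Ns := ⟨d, hdN⟩ with hdNdef
    refine ⟨Lc (Coalgebra.counit (R := k) ∘ₗ Ns.subtype) C (G ↥Ns σ hσ dN), ?_⟩
    rw [← Lc_lTensor]
    have h3 : LinearMap.lTensor ↥Ns φ (G ↥Ns σ hσ dN) = σ dN := by
      have := LinearMap.congr_fun (h2.symm.trans h1) dN
      simpa using this
    rw [h3, Lc_counit_of_restrict hres dN]
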